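/- Probabilistic lifting is monotone with respect to the pointwise order on sub-distributions: if R is a preorder on a countable set S, then ≤ ; R̂ ; ≥ ⊆ R̂ fails in general, but the one-sided composition holds: if μ' ≤ μ, μ R̂ ν, and ν ≤ ν', then μ' R̂ ν'. -/

import Mathlib

open scoped ENNReal

/-- A discrete sub-probability distribution: total mass at most 1. -/
def SubDist {S : Type*} (μ : S → ℝ≥0∞) : Prop := ∑' x, μ x ≤ 1

/-- Probabilistic lifting of a relation via a matching (coupling). -/
def Lift {S : Type*} (R : S → S → Prop) (μ ν : S → ℝ≥0∞) : Prop :=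
  ∃ m : S → S → ℝ≥0∞,
    (∀ x y, m x y ≠ 0 → R x y) ∧
    (∀ x, (∑' y, m x y) = μ x) ∧
    (∀ y, (∑' x, m x y) ≤ ν y)

/-- One-sided monotonicity of probabilistic lifting for a preorder `R`:
`μ' ≤ μ`, `μ R̂ ν` and `ν ≤ ν'` imply `μ' R̂ ν'`. -/
theorem stmt6 {S : Type*} [Countable S] (R : S → S → Prop)
    (hrefl : ∀ x, R x x) (htrans : ∀ x y z, R x y → R y z → R x z)
    (μ' μ ν ν' : S → ℝ≥0∞)
    (hμ' : SubDist μ') (hμ : SubDist μ) (hν : SubDist ν) (hν' : SubDist ν')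
    (h1 : ∀ x, μ' x ≤ μ x) (h2 : Lift R μ ν) (h3 : ∀ y, ν y ≤ ν' y) :
    Lift R μ' ν' := by
  obtain ⟨m, hR, hrow, hcol⟩ := h2
  refine ⟨fun x y => m x y * (μ' x / μ x), ?_, ?_, ?_⟩
  · intro x y h
    exact hR x y (fun hz => h (by simp [hz]))
  · intro x
    rw [ENNReal.tsum_mul_right, hrow]
    rcases eq_or_ne (μ x) 0 with h0 | h0
    · have : μ' x = 0 := le_antisymm (h0 ▸ h1 x) zero_le
      simp [h0, this]
    · have hfin : μ x ≠ ⊤ := by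
        intro ht
        have := le_trans (ENNReal.le_tsum x) hμ
        simp [ht] at this
      rw [ENNReal.mul_div_cancel h0 hfin]
  · intro y
    refine le_trans ?_ (le_trans (hcol y) (h3 y))
    refine ENNReal.tsum_le_tsum fun x => ?_
    rcases eq_or_ne (μ x) 0 with h0 | h0
    · have : m x y = 0 := by
        have := hrow x
        rw [h0] at this
        exact le_antisymm (this ▸ ENNReal.le_tsum y) zero_le
      simp [this]
    · calc m x y * (μ' x / μ x) ≤ m x y * 1 := by
            gcongr
            exact ENNReal.div_le_of_le_mul (by simpa using h1 x)
          _ = m x y := mul_one _
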